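/- The graph V_8 + 13 + 24 (V_8 together with additional edges 13 and 24) is internally 4-connected and contains no W_6 minor. -/

import Mathlib

open SimpleGraph

/-- `H` is a minor of `G`: disjoint connected branch sets in `G`, one per vertex of `H`,
with an edge of `G` between branch sets of adjacent vertices of `H`. -/
def SimpleGraph.IsMinorOf {V W : Type*} (H : SimpleGraph W) (G : SimpleGraph V) : Prop :=
  ∃ B : W → Set V,
    (∀ w, (G.induce (B w)).Connected) ∧
    (Pairwise fun w₁ w₂ => Disjoint (B w₁) (B w₂)) ∧
    (∀ w₁ w₂, H.Adj w₁ w₂ → ∃ x ∈ B w₁, ∃ y ∈ B w₂, G.Adj x y)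

/-- The wheel `W₆`: hub `0` joined to the 6-cycle `1-2-3-4-5-6-1`. -/
def W6 : SimpleGraph (Fin 7) := SimpleGraph.fromEdgeSet
  {s(0,1), s(0,2), s(0,3), s(0,4), s(0,5), s(0,6),
   s(1,2), s(2,3), s(3,4), s(4,5), s(5,6), s(6,1)}

/-- `V₈`: the 8-cycle (vertices `0,…,7` standing for `1,…,8`) plus the four diagonals. -/
def V8 : SimpleGraph (Fin 8) := SimpleGraph.fromEdgeSet
  {s(0,1), s(1,2), s(2,3), s(3,4), s(4,5), s(5,6), s(6,7), s(7,0),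
   s(0,4), s(1,5), s(2,6), s(3,7)}

/-- `G` is 3-connected: at least 4 vertices and deleting any 2 vertices leaves it connected. -/
def ThreeConnected {V : Type*} (G : SimpleGraph V) : Prop :=
  4 ≤ Nat.card V ∧ ∀ s : Set V, s.ncard ≤ 2 → (G.induce sᶜ).Connected

/-- A 3-separation of `G`. -/
def IsSep3 {V : Type*} (G : SimpleGraph V) (G1 G2 : G.Subgraph) : Prop :=
  G1.edgeSet ∪ G2.edgeSet = G.edgeSet ∧
  G1.verts ∪ G2.verts = Set.univ ∧
  (G1.verts \ G2.verts).Nonempty ∧ (G2.verts \ G1.verts).Nonempty ∧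
  (G1.verts ∩ G2.verts).ncard = 3

/-- Internally 4-connected: 3-connected, at least 5 vertices, and every 3-separation has a
side isomorphic to `K_{1,3}`. -/
def Internally4Connected {V : Type*} (G : SimpleGraph V) : Prop :=
  ThreeConnected G ∧ 5 ≤ Nat.card V ∧
  ∀ G1 G2 : G.Subgraph, IsSep3 G G1 G2 →
    Nonempty (G1.coe ≃g completeBipartiteGraph (Fin 1) (Fin 3)) ∨
    Nonempty (G2.coe ≃g completeBipartiteGraph (Fin 1) (Fin 3))

/-- `V₈ + 13 + 24` (labels `1,…,8` as `0,…,7`). -/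
def V8_13_24 : SimpleGraph (Fin 8) := V8 ⊔ SimpleGraph.fromEdgeSet {s(0,2), s(1,3)}

/-! ### Auxiliary decidable adjacency -/

def adjN : Nat → Nat → Bool
  | 0,1 | 1,2 | 2,3 | 3,4 | 4,5 | 5,6 | 6,7 | 7,0
  | 0,4 | 1,5 | 2,6 | 3,7 | 0,2 | 1,3 => true
  | _,_ => false

def adjB (a b : Fin 8) : Bool := adjN a.val b.val || adjN b.val a.val

set_option synthInstance.maxSize 4000 in
set_option synthInstance.maxHeartbeats 4000000 in
lemma adj_iff : ∀ a b, V8_13_24.Adj a b ↔ adjB a b = true := by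
  simp only [V8_13_24, V8, sup_adj, fromEdgeSet_adj, Set.mem_insert_iff,
    Set.mem_singleton_iff, Sym2.eq_iff]
  decide

lemma adjB_symm : ∀ a b, adjB a b = adjB b a := by decide
lemma adjB_irrefl : ∀ a, adjB a a = false := by decide

/-! ### Generic connectivity helpers -/

lemma reach_of_rtg {V : Type*} (G : SimpleGraph V) (t : Set V) {x y : V} (hx : x ∈ t)
    (h : Relation.ReflTransGen (fun a b => a ∈ t ∧ b ∈ t ∧ G.Adj a b) x y) :
    ∀ hy : y ∈ t, (G.induce t).Reachable ⟨x, hx⟩ ⟨y, hy⟩ := by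
  induction h with
  | refl => exact fun hy => Reachable.refl _
  | tail _ h2 ih =>
    intro hy
    exact (ih h2.1).trans (SimpleGraph.Adj.reachable (by exact h2.2.2))

lemma adj_of_connected_pair {V : Type*} (G : SimpleGraph V) (s : Set V)
    (h : (G.induce s).Connected) {a b : V} (ha : a ∈ s) (hb : b ∈ s) (hab : a ≠ b)
    (hsub : s ⊆ {a, b}) : G.Adj a b := by
  obtain ⟨w⟩ := h.preconnected ⟨a, ha⟩ ⟨b, hb⟩
  cases w with
  | nil => exact absurd rfl hab
  | cons h' p =>
    rename_i c
    have hc : c.val ∈ s := c.2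
    have hadj : G.Adj a c.val := h'
    rcases hsub hc with hca | hcb
    · exact absurd (hca ▸ hadj) (G.irrefl)
    · exact (Set.mem_singleton_iff.mp hcb) ▸ hadj

lemma mySmallSet (s : Set (Fin 8)) (h : s.ncard ≤ 2) : ∃ a b : Fin 8, s ⊆ {a, b} := by
  rcases Set.eq_empty_or_nonempty s with rfl | ⟨a, ha⟩
  · exact ⟨0, 0, by simp⟩
  by_cases hb : ∃ b ∈ s, b ≠ a
  · obtain ⟨b, hbs, hba⟩ := hb
    refine ⟨a, b, fun c hc => ?_⟩
    by_contra hcn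
    simp only [Set.mem_insert_iff, Set.mem_singleton_iff, not_or] at hcn
    obtain ⟨hca, hcb⟩ := hcn
    have h3 : ({a, b, c} : Set (Fin 8)) ⊆ s := by
      intro z hz
      rcases hz with rfl | rfl | rfl
      · exact ha
      · exact hbs
      · exact hc
    have hcard : ({a, b, c} : Set (Fin 8)).ncard = 3 := by
      rw [Set.ncard_insert_of_notMem (by simp [hba.symm, Ne.symm hca]),
        Set.ncard_insert_of_notMem (by simp [Ne.symm hcb]), Set.ncard_singleton]
    have := Set.ncard_le_ncard h3 (Set.toFinite s)
    omega
  · push_neg at hb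
    exact ⟨a, a, fun c hc => by simp [hb c hc]⟩

/-! ### Closure computation -/

def myClosure (m : Fin 8 → Bool) : Nat → List (Fin 8) → List (Fin 8)
  | 0, l => l
  | n+1, l => myClosure m n
      ((List.finRange 8).filter fun y => m y && l.any fun x => x == y || adjB x y)

def stepRel (m : Fin 8 → Bool) (u v : Fin 8) : Prop :=
  m u = true ∧ m v = true ∧ adjB u v = true

lemma closure_sound (m : Fin 8 → Bool) (s0 : Fin 8) :
    ∀ (n : Nat) (l : List (Fin 8)),
      (∀ x ∈ l, m x = true ∧ Relation.ReflTransGen (stepRel m) s0 x) →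
      ∀ x ∈ myClosure m n l, m x = true ∧ Relation.ReflTransGen (stepRel m) s0 x := by
  intro n
  induction n with
  | zero => exact fun l h x hx => h x hx
  | succ n ih =>
    intro l h x hx
    refine ih _ ?_ x hx
    intro z hz
    simp only [List.mem_filter, List.mem_finRange, true_and, Bool.and_eq_true,
      List.any_eq_true, Bool.or_eq_true, beq_iff_eq] at hz
    obtain ⟨hmz, w, hw, hcase⟩ := hz
    rcases hcase with rfl | haw
    · exact h w hw
    · obtain ⟨hmw, hrw⟩ := h w hw
      exact ⟨hmz, hrw.tail ⟨hmw, hmz, haw⟩⟩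

def mab (a b : Fin 8) : Fin 8 → Bool := fun y => !(y == a || y == b)

def src (a b : Fin 8) : Fin 8 :=
  if a = 0 ∨ b = 0 then (if a = 1 ∨ b = 1 then 2 else 1) else 0

lemma F1 : ∀ a b : Fin 8, mab a b (src a b) = true ∧
    ∀ y : Fin 8, mab a b y = true →
      (myClosure (mab a b) 7 [src a b]).any (fun x => x == y) = true := by decide

lemma F2 : ∀ a b x : Fin 8, ∃ w : Fin 8, mab a b w = true ∧ adjB x w = true := by decide

lemma stepRel_symm (m : Fin 8 → Bool) : Symmetric (stepRel m) := by
  intro u v ⟨h1, h2, h3⟩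
  exact ⟨h2, h1, (adjB_symm u v) ▸ h3⟩

/-! ### Three-connectivity -/

lemma threeConn : ThreeConnected V8_13_24 := by
  constructor
  · simp [Nat.card_eq_fintype_card]
  intro s hs
  obtain ⟨a, b, hsub⟩ := mySmallSet s hs
  set t : Set (Fin 8) := sᶜ with ht
  -- membership transfer
  have hmt : ∀ x : Fin 8, mab a b x = true → x ∈ t := by
    intro x hx
    simp only [mab, Bool.not_eq_true', Bool.or_eq_false_iff, beq_eq_false_iff_ne] at hx
    intro hxs
    rcases hsub hxs with rfl | h
    · exact hx.1 rfl
    · exact hx.2 (Set.mem_singleton_iff.mp h)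
  have hstep : ∀ x y : Fin 8, stepRel (mab a b) x y →
      (fun u v => u ∈ t ∧ v ∈ t ∧ V8_13_24.Adj u v) x y := by
    intro x y ⟨h1, h2, h3⟩
    exact ⟨hmt x h1, hmt y h2, (adj_iff x y).mpr h3⟩
  have hreach : ∀ y : Fin 8, mab a b y = true →
      Relation.ReflTransGen (stepRel (mab a b)) (src a b) y := by
    intro y hy
    have h1 := (F1 a b).1
    have h2 := (F1 a b).2 y hy
    simp only [List.any_eq_true, beq_iff_eq] at h2
    obtain ⟨x, hx, rfl⟩ := h2
    exact (closure_sound (mab a b) (src a b) 7 [src a b]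
      (by intro z hz; simp at hz; subst hz; exact ⟨h1, Relation.ReflTransGen.refl⟩) x hx).2
  -- every vertex of t reaches some vertex with mab true
  have hout : ∀ x : Fin 8, x ∈ t → ∃ w, mab a b w = true ∧
      Relation.ReflTransGen (fun u v => u ∈ t ∧ v ∈ t ∧ V8_13_24.Adj u v) x w := by
    intro x hx
    by_cases hmx : mab a b x = true
    · exact ⟨x, hmx, Relation.ReflTransGen.refl⟩
    · obtain ⟨w, hw, haw⟩ := F2 a b x
      exact ⟨w, hw, Relation.ReflTransGen.single ⟨hx, hmt w hw, (adj_iff x w).mpr haw⟩⟩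
  have hsymt : Symmetric (fun u v : Fin 8 => u ∈ t ∧ v ∈ t ∧ V8_13_24.Adj u v) := by
    intro u v ⟨h1, h2, h3⟩; exact ⟨h2, h1, h3.symm⟩
  have hconn : ∀ x ∈ t, ∀ y ∈ t,
      Relation.ReflTransGen (fun u v => u ∈ t ∧ v ∈ t ∧ V8_13_24.Adj u v) x y := by
    intro x hx y hy
    obtain ⟨wx, hwx, hrx⟩ := hout x hx
    obtain ⟨wy, hwy, hry⟩ := hout y hy
    have h1 : Relation.ReflTransGen (stepRel (mab a b)) wx wy :=
      (haveI : Std.Symm (stepRel (mab a b)) := ⟨fun _ _ h => stepRel_symm _ h⟩;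
        Std.Symm.symm _ _ (hreach wx hwx)).trans (hreach wy hwy)
    have h2 := Relation.ReflTransGen.mono hstep _ _ h1
    exact (hrx.trans h2).trans (haveI : Std.Symm (fun u v : Fin 8 => u ∈ t ∧ v ∈ t ∧ V8_13_24.Adj u v) :=
      ⟨fun _ _ h => hsymt h⟩; Std.Symm.symm _ _ hry)
  rw [connected_iff]
  refine ⟨fun x y => ?_, ⟨⟨src a b, hmt _ (F1 a b).1⟩⟩⟩
  exact reach_of_rtg V8_13_24 t x.2 (hconn x.1 x.2 y.1 y.2) y.2

/-! ### No W6 minor -/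

lemma cardS : ∀ a b : Fin 8, (a = b ∨ adjB a b = true) →
    (Finset.univ.filter fun y : Fin 8 =>
      y ≠ a ∧ y ≠ b ∧ (adjB a y = true ∨ adjB b y = true)).card ≤ 5 := by decide

lemma no_W6 : ¬ W6.IsMinorOf V8_13_24 := by
  rintro ⟨B, hconn, hdisj, hadj⟩
  have hW : ∀ i : Fin 7, i ≠ 0 → W6.Adj 0 i := by
    intro i hi
    fin_cases i
    · exact absurd rfl hi
    all_goals
      simp only [W6, fromEdgeSet_adj, Set.mem_insert_iff, Set.mem_singleton_iff, Sym2.eq_iff]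
    all_goals decide
  have key : ∀ j : Fin 6, ∃ x ∈ B 0, ∃ y ∈ B j.succ, V8_13_24.Adj x y :=
    fun j => hadj 0 j.succ (hW j.succ (Fin.succ_ne_zero j))
  choose x hx y hy hxy using key
  have hyinj : Function.Injective y := by
    intro i j hij
    by_contra hne
    have hsne : (Fin.succ i) ≠ (Fin.succ j) := fun h => hne (Fin.succ_injective _ h)
    exact (Set.disjoint_left.mp (hdisj hsne)) (hy i) (hij ▸ hy j)
  have hyB0 : ∀ j, y j ∉ B 0 := by
    intro j hj
    exact (Set.disjoint_left.mp (hdisj (Fin.succ_ne_zero j).symm)) hj (hy j)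
  have hTcard : ((Finset.univ.image y)ᶜ : Finset (Fin 8)).card = 2 := by
    rw [Finset.card_compl, Finset.card_image_of_injective _ hyinj]
    simp
  obtain ⟨α, β, hαβ, hTe⟩ := Finset.card_eq_two.mp hTcard
  have hB0T : ∀ v ∈ B 0, v = α ∨ v = β := by
    intro v hv
    have hvim : v ∉ Finset.univ.image y := by
      intro hvim
      obtain ⟨j, _, rfl⟩ := Finset.mem_image.mp hvim
      exact hyB0 j hv
    have hvT : v ∈ ((Finset.univ.image y)ᶜ : Finset (Fin 8)) := Finset.mem_compl.mpr hvim
    rw [hTe] at hvT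
    simpa using hvT
  have hyne : ∀ j (c : Fin 8), c = α ∨ c = β → y j ≠ c := by
    intro j c hc h
    have h1 : y j ∈ Finset.univ.image y := Finset.mem_image.mpr ⟨j, Finset.mem_univ _, rfl⟩
    have h2 : c ∈ ((Finset.univ.image y)ᶜ : Finset (Fin 8)) := by
      rw [hTe]; rcases hc with rfl | rfl <;> simp
    rw [← h] at h2
    exact (Finset.mem_compl.mp h2) h1
  obtain ⟨⟨v0, hv0⟩⟩ := (hconn 0).nonempty
  obtain ⟨aa, bb, haa, hbb, hcond, hsubB⟩ :
      ∃ a b : Fin 8, (a = α ∨ a = β) ∧ (b = α ∨ b = β) ∧ (a = b ∨ adjB a b = true) ∧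
        ∀ u ∈ B 0, u = a ∨ u = b := by
    by_cases hα : α ∈ B 0 <;> by_cases hβ : β ∈ B 0
    · refine ⟨α, β, Or.inl rfl, Or.inr rfl,
        Or.inr ((adj_iff _ _).mp (adj_of_connected_pair _ _ (hconn 0) hα hβ hαβ ?_)),
        fun u hu => hB0T u hu⟩
      intro u hu
      rcases hB0T u hu with rfl | rfl <;> simp
    · refine ⟨α, α, Or.inl rfl, Or.inl rfl, Or.inl rfl, fun u hu => ?_⟩
      rcases hB0T u hu with h | h
      · exact Or.inl h
      · exact absurd (h ▸ hu) hβ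
    · refine ⟨β, β, Or.inr rfl, Or.inr rfl, Or.inl rfl, fun u hu => ?_⟩
      rcases hB0T u hu with h | h
      · exact absurd (h ▸ hu) hα
      · exact Or.inl h
    · exfalso
      rcases hB0T v0 hv0 with h | h
      · exact hα (h ▸ hv0)
      · exact hβ (h ▸ hv0)
  have hmap : ∀ j : Fin 6, j ∈ (Finset.univ : Finset (Fin 6)) →
      y j ∈ Finset.univ.filter (fun z : Fin 8 =>
        z ≠ aa ∧ z ≠ bb ∧ (adjB aa z = true ∨ adjB bb z = true)) := by
    intro j _
    refine Finset.mem_filter.mpr ⟨Finset.mem_univ _, hyne j aa haa, hyne j bb hbb, ?_⟩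
    have hadjj : adjB (x j) (y j) = true := (adj_iff _ _).mp (hxy j)
    rcases hsubB (x j) (hx j) with h | h
    · exact Or.inl (h ▸ hadjj)
    · exact Or.inr (h ▸ hadjj)
  have hinj' : Set.InjOn y ↑(Finset.univ : Finset (Fin 6)) := fun i _ j _ h => hyinj h
  have hle := Finset.card_le_card_of_injOn y hmap hinj'
  rw [Finset.card_univ] at hle
  have h5 := cardS aa bb hcond
  simp only [Fintype.card_fin] at hle
  omega

/-! ### 3-separations -/

def sepP (f : Fin 8 → Fin 3) : Prop :=
    (Finset.univ.filter fun x => f x = 2).card = 3 →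
    (∀ x y : Fin 8, adjB x y = true → f x = 0 → f y ≠ 1) →
    (∃ x, f x = 0) → (∃ x, f x = 1) →
    (∃ v, (∀ x, f x = 0 ↔ x = v) ∧ (∀ c, f c = 2 ↔ adjB v c = true)) ∨
    (∃ v, (∀ x, f x = 1 ↔ x = v) ∧ (∀ c, f c = 2 ↔ adjB v c = true))

set_option synthInstance.maxSize 4000 in
set_option synthInstance.maxHeartbeats 1000000 in
instance sepPDecidable (f : Fin 8 → Fin 3) : Decidable (sepP f) := by
  unfold sepP; infer_instance

set_option maxRecDepth 100000 in
set_option maxHeartbeats 8000000 in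
lemma sepLemma8 : ∀ a0 a1 a2 a3 a4 a5 a6 a7 : Fin 3,
    sepP ![a0, a1, a2, a3, a4, a5, a6, a7] := by decide

lemma sepLemma (f : Fin 8 → Fin 3) :
    (Finset.univ.filter fun x => f x = 2).card = 3 →
    (∀ x y : Fin 8, adjB x y = true → f x = 0 → f y ≠ 1) →
    (∃ x, f x = 0) → (∃ x, f x = 1) →
    (∃ v, (∀ x, f x = 0 ↔ x = v) ∧ (∀ c, f c = 2 ↔ adjB v c = true)) ∨
    (∃ v, (∀ x, f x = 1 ↔ x = v) ∧ (∀ c, f c = 2 ↔ adjB v c = true)) := by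
  have h : ![f 0, f 1, f 2, f 3, f 4, f 5, f 6, f 7] = f := by
    funext x; fin_cases x <;> rfl
  have hs := sepLemma8 (f 0) (f 1) (f 2) (f 3) (f 4) (f 5) (f 6) (f 7)
  rw [h] at hs
  exact hs

lemma nbrs3 : ∀ v : Fin 8,
    (∃ c1 c2 c3 : Fin 8, c1 ≠ c2 ∧ c1 ≠ c3 ∧ c2 ≠ c3 ∧ v ≠ c1 ∧ v ≠ c2 ∧ v ≠ c3 ∧
      (∀ y, adjB v y = true ↔ (y = c1 ∨ y = c2 ∨ y = c3)) ∧
      adjB c1 c2 = false ∧ adjB c1 c3 = false ∧ adjB c2 c3 = false) ∨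
    (∃ d1 d2 d3 d4 : Fin 8, d1 ≠ d2 ∧ d1 ≠ d3 ∧ d1 ≠ d4 ∧ d2 ≠ d3 ∧ d2 ≠ d4 ∧ d3 ≠ d4 ∧
      adjB v d1 = true ∧ adjB v d2 = true ∧ adjB v d3 = true ∧ adjB v d4 = true) := by decide

lemma side (H1 H2 : V8_13_24.Subgraph)
    (hcov : ∀ x y, V8_13_24.Adj x y → H1.Adj x y ∨ H2.Adj x y)
    (v : Fin 8)
    (hA : H1.verts \ H2.verts = {v})
    (hC : ∀ c, c ∈ H1.verts ∩ H2.verts ↔ adjB v c = true)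
    (hC3 : (H1.verts ∩ H2.verts).ncard = 3) :
    Nonempty (H1.coe ≃g completeBipartiteGraph (Fin 1) (Fin 3)) := by
  rcases nbrs3 v with ⟨c1, c2, c3, h12, h13, h23, hv1, hv2, hv3, hchar, e12, e13, e23⟩ |
    ⟨d1, d2, d3, d4, g12, g13, g14, g23, g24, g34, k1, k2, k3, k4⟩
  swap
  · exfalso
    have hsub : ({d1, d2, d3, d4} : Set (Fin 8)) ⊆ H1.verts ∩ H2.verts := by
      intro z hz
      rcases hz with rfl | rfl | rfl | hz
      · exact (hC _).mpr k1
      · exact (hC _).mpr k2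
      · exact (hC _).mpr k3
      · exact (hC _).mpr ((Set.mem_singleton_iff.mp hz) ▸ k4)
    have h4 : ({d1, d2, d3, d4} : Set (Fin 8)).ncard = 4 := by
      rw [Set.ncard_insert_of_notMem (by simp [g12, g13, g14]),
        Set.ncard_insert_of_notMem (by simp [g23, g24]),
        Set.ncard_insert_of_notMem (by simp [g34]), Set.ncard_singleton]
    have := Set.ncard_le_ncard hsub (Set.toFinite _)
    omega
  have e21 : adjB c2 c1 = false := by rw [adjB_symm]; exact e12
  have e31 : adjB c3 c1 = false := by rw [adjB_symm]; exact e13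
  have e32 : adjB c3 c2 = false := by rw [adjB_symm]; exact e23
  have hvmem : v ∈ H1.verts \ H2.verts := by rw [hA]; exact rfl
  have hv1V : v ∈ H1.verts := hvmem.1
  have hvn2 : v ∉ H2.verts := hvmem.2
  have hci : ∀ c, (c = c1 ∨ c = c2 ∨ c = c3) →
      c ∈ H1.verts ∧ c ∈ H2.verts ∧ V8_13_24.Adj v c := by
    intro c hc
    have hb : adjB v c = true := (hchar c).mpr hc
    have hcC := (hC c).mp
    have hcC' := (hC c).mpr hb
    exact ⟨hcC'.1, hcC'.2, (adj_iff _ _).mpr hb⟩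
  have hV1 : H1.verts = {v, c1, c2, c3} := by
    ext z
    simp only [Set.mem_insert_iff, Set.mem_singleton_iff]
    constructor
    · intro hz
      by_cases h2 : z ∈ H2.verts
      · have := (hC z).mp ⟨hz, h2⟩
        right; exact (hchar z).mp this
      · left
        have hzz : z ∈ H1.verts \ H2.verts := ⟨hz, h2⟩
        rw [hA] at hzz
        exact hzz
    · rintro (rfl | hz)
      · exact hv1V
      · exact (hci z hz).1
  have hH1Adj : ∀ p q : Fin 8, H1.Adj p q ↔
      ((p = v ∧ (q = c1 ∨ q = c2 ∨ q = c3)) ∨ (q = v ∧ (p = c1 ∨ p = c2 ∨ p = c3))) := by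
    intro p q
    constructor
    · intro h
      have hp := H1.edge_vert h
      have hq := H1.edge_vert h.symm
      have hpq : adjB p q = true := (adj_iff _ _).mp (H1.adj_sub h)
      rw [hV1] at hp hq
      simp only [Set.mem_insert_iff, Set.mem_singleton_iff] at hp hq
      rcases hp with rfl | rfl | rfl | rfl <;> rcases hq with rfl | rfl | rfl | rfl <;>
        first
          | (exact Or.inl ⟨rfl, Or.inl rfl⟩)
          | (exact Or.inl ⟨rfl, Or.inr (Or.inl rfl)⟩)
          | (exact Or.inl ⟨rfl, Or.inr (Or.inr rfl)⟩)
          | (exact Or.inr ⟨rfl, Or.inl rfl⟩)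
          | (exact Or.inr ⟨rfl, Or.inr (Or.inl rfl)⟩)
          | (exact Or.inr ⟨rfl, Or.inr (Or.inr rfl)⟩)
          | (exfalso; simp [adjB_irrefl, e12, e13, e23, e21, e31, e32] at hpq)
    · rintro (⟨rfl, hq⟩ | ⟨rfl, hp2⟩)
      · rcases hcov _ _ (hci _ hq).2.2 with h | h
        · exact h
        · exact absurd (H2.edge_vert h) hvn2
      · rcases hcov _ _ (hci _ hp2).2.2 with h | h
        · exact h.symm
        · exact absurd (H2.edge_vert h) hvn2
  classical
  refine ⟨⟨⟨fun z => if z.val = c1 then Sum.inr 0 else if z.val = c2 then Sum.inr 1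
      else if z.val = c3 then Sum.inr 2 else Sum.inl 0,
    fun w => Sum.rec (fun _ => ⟨v, by rw [hV1]; exact Or.inl rfl⟩)
      (fun j => if j = 0 then ⟨c1, by rw [hV1]; simp⟩ else if j = 1 then ⟨c2, by rw [hV1]; simp⟩
        else ⟨c3, by rw [hV1]; simp⟩) w, ?_, ?_⟩, ?_⟩⟩
  · rintro ⟨z, hz⟩
    rw [hV1] at hz
    have hz' : z = v ∨ z = c1 ∨ z = c2 ∨ z = c3 := by simpa using hz
    rcases hz' with rfl | rfl | rfl | rfl
    · simp [hv1, hv2, hv3]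
    · simp
    · simp [Ne.symm h12]
    · simp [Ne.symm h13, Ne.symm h23]
  · rintro (z | j)
    · simp only [hv1, hv2, hv3, if_neg]
      exact congrArg Sum.inl (Subsingleton.elim _ _)
    · fin_cases j
      · simp
      · simp [Ne.symm h12]
      · simp [Ne.symm h13, Ne.symm h23]
  · rintro ⟨p, hp⟩ ⟨q, hq⟩
    have hrw : H1.coe.Adj ⟨p, hp⟩ ⟨q, hq⟩ ↔ H1.Adj p q := Iff.rfl
    rw [hrw, hH1Adj]
    have hp' : p = v ∨ p = c1 ∨ p = c2 ∨ p = c3 := by rw [hV1] at hp; simpa using hp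
    have hq' : q = v ∨ q = c1 ∨ q = c2 ∨ q = c3 := by rw [hV1] at hq; simpa using hq
    rcases hp' with rfl | rfl | rfl | rfl <;> rcases hq' with rfl | rfl | rfl | rfl <;>
      simp [completeBipartiteGraph, hv1, hv2, hv3, h12, h13, h23,
        Ne.symm hv1, Ne.symm hv2, Ne.symm hv3, Ne.symm h12, Ne.symm h13, Ne.symm h23]

lemma sep3 : ∀ G1 G2 : V8_13_24.Subgraph, IsSep3 V8_13_24 G1 G2 →
    Nonempty (G1.coe ≃g completeBipartiteGraph (Fin 1) (Fin 3)) ∨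
    Nonempty (G2.coe ≃g completeBipartiteGraph (Fin 1) (Fin 3)) := by
  intro G1 G2 hsep
  obtain ⟨hE, hV, hA, hB, hC⟩ := hsep
  classical
  have hcov : ∀ x y, V8_13_24.Adj x y → G1.Adj x y ∨ G2.Adj x y := by
    intro x y h
    have hm : s(x, y) ∈ V8_13_24.edgeSet := h
    rw [← hE] at hm
    rcases hm with hm | hm
    · exact Or.inl hm
    · exact Or.inr hm
  set f : Fin 8 → Fin 3 := fun x =>
    if x ∈ G1.verts ∩ G2.verts then 2 else if x ∈ G1.verts then 0 else 1 with hf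
  have f2 : ∀ x, f x = 2 ↔ x ∈ G1.verts ∩ G2.verts := by
    intro x
    by_cases h2 : x ∈ G1.verts ∩ G2.verts
    · simp only [hf, if_pos h2]
      exact iff_of_true trivial h2
    · by_cases h1 : x ∈ G1.verts
      · simp only [hf, if_neg h2, if_pos h1]
        exact iff_of_false (by decide) h2
      · simp only [hf, if_neg h2, if_neg h1]
        exact iff_of_false (by decide) h2
  have f0 : ∀ x, f x = 0 ↔ x ∈ G1.verts \ G2.verts := by
    intro x
    by_cases h2 : x ∈ G1.verts ∩ G2.verts
    · simp only [hf, if_pos h2]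
      constructor
      · intro h; exact absurd h (by decide)
      · intro hd; exact absurd h2.2 hd.2
    · by_cases h1 : x ∈ G1.verts
      · simp only [hf, if_neg h2, if_pos h1]
        constructor
        · intro _; exact ⟨h1, fun hx2 => h2 ⟨h1, hx2⟩⟩
        · intro _; trivial
      · simp only [hf, if_neg h2, if_neg h1]
        constructor
        · intro h; exact absurd h (by decide)
        · intro hd; exact absurd hd.1 h1
  have f1 : ∀ x, f x = 1 ↔ x ∈ G2.verts \ G1.verts := by
    intro x
    by_cases h2 : x ∈ G1.verts ∩ G2.verts
    · simp only [hf, if_pos h2]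
      constructor
      · intro h; exact absurd h (by decide)
      · intro hd; exact absurd h2.1 hd.2
    · by_cases h1 : x ∈ G1.verts
      · simp only [hf, if_neg h2, if_pos h1]
        constructor
        · intro h; exact absurd h (by decide)
        · intro hd; exact absurd h1 hd.2
      · simp only [hf, if_neg h2, if_neg h1]
        constructor
        · intro _
          refine ⟨?_, h1⟩
          have : x ∈ G1.verts ∪ G2.verts := hV ▸ Set.mem_univ x
          rcases this with h | h
          · exact absurd h h1
          · exact h
        · intro _; trivial
  have hcard : (Finset.univ.filter fun x => f x = 2).card = 3 := by
    have he : (Finset.univ.filter fun x => f x = 2)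
        = (Set.toFinite (G1.verts ∩ G2.verts)).toFinset := by
      ext z
      simp only [Finset.mem_filter, Finset.mem_univ, true_and, Set.Finite.mem_toFinset, f2 z]
    rw [he, ← Set.ncard_eq_toFinset_card _ (Set.toFinite _)]
    exact hC
  have hedge : ∀ x y : Fin 8, adjB x y = true → f x = 0 → f y ≠ 1 := by
    intro x y hxy h0 h1
    have hax := (adj_iff x y).mpr hxy
    have hx := (f0 x).mp h0
    have hy := (f1 y).mp h1
    rcases hcov x y hax with h | h
    · exact hy.2 (G1.edge_vert h.symm)
    · exact hx.2 (G2.edge_vert h)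
  have hex0 : ∃ x, f x = 0 := by
    obtain ⟨x, hx⟩ := hA
    exact ⟨x, (f0 x).mpr hx⟩
  have hex1 : ∃ x, f x = 1 := by
    obtain ⟨x, hx⟩ := hB
    exact ⟨x, (f1 x).mpr hx⟩
  rcases sepLemma f hcard hedge hex0 hex1 with ⟨v, hv0, hv2⟩ | ⟨v, hv1, hv2⟩
  · left
    apply side G1 G2 hcov v
    · ext z
      simp only [Set.mem_singleton_iff]
      exact ((f0 z).symm.trans (hv0 z))
    · intro c
      rw [← f2 c]
      exact hv2 c
    · exact hC
  · right
    apply side G2 G1 (fun x y h => (hcov x y h).symm) v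
    · ext z
      simp only [Set.mem_singleton_iff]
      exact ((f1 z).symm.trans (hv1 z))
    · intro c
      rw [Set.inter_comm, ← f2 c]
      exact hv2 c
    · rw [Set.inter_comm]
      exact hC

/-- `V₈ + 13 + 24` is internally 4-connected and `W₆`-minor-free. -/
theorem stmt19 : Internally4Connected V8_13_24 ∧ ¬ W6.IsMinorOf V8_13_24 := by
  exact ⟨⟨threeConn, by simp [Nat.card_eq_fintype_card], sep3⟩, no_W6⟩
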